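/- Let g be a real number and d ≥ 1 an integer, and set ξ(η) = L_d^{(g-1/2)}(-η) ∈ ℝ[η]. For n ≥ 0 let P_n = L_n^{(g-1/2)} and define F P_n = ξ·P_n' - (ξ + ξ')·P_n ∈ ℝ[η]. Then the polynomial identity η·(F P_n)' + (g + 1/2)·(F P_n) = -(n + g + d + 1/2)·ξ·P_n holds in ℝ[η]. -/

import Mathlib

open Polynomial

/-- The Laguerre polynomial `L_n^{(α)}` with real parameter:
`L_n^{(α)}(x) = Σ_{k=0}^{n} (-1)^k (α+k+1)_{n-k} / ((n-k)!·k!) · x^k`. -/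
noncomputable def laguerreP (α : ℝ) (n : ℕ) : Polynomial ℝ :=
  ∑ k ∈ Finset.range (n + 1),
    Polynomial.C ((-1 : ℝ) ^ k * (ascPochhammer ℝ (n - k)).eval (α + k + 1) /
        ((n - k).factorial * k.factorial)) * Polynomial.X ^ k

lemma coeff_laguerreP (α : ℝ) (n k : ℕ) :
    (laguerreP α n).coeff k = if k ≤ n then
      (-1 : ℝ) ^ k * (ascPochhammer ℝ (n - k)).eval (α + k + 1) /
        ((n - k).factorial * k.factorial) else 0 := by
  unfold laguerreP
  rw [finset_sum_coeff]
  simp [coeff_C_mul, coeff_X_pow, Finset.sum_ite_eq', Nat.lt_succ_iff]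

lemma asc_eval_succ_left (m : ℕ) (x : ℝ) :
    (ascPochhammer ℝ (m+1)).eval x = x * (ascPochhammer ℝ m).eval (x+1) := by
  rw [ascPochhammer_succ_left]
  simp [eval_comp]

lemma key (α : ℝ) (n k : ℕ) :
    ((k:ℝ)+1) * ((α+1) + (k:ℝ)) * ((laguerreP α n).coeff (k+1))
      + ((n:ℝ) - (k:ℝ)) * ((laguerreP α n).coeff k) = 0 := by
  rw [coeff_laguerreP, coeff_laguerreP]
  rcases lt_trichotomy k n with h | h | h
  · have hk1 : k + 1 ≤ n := h
    have hk : k ≤ n := le_of_lt h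
    rw [if_pos hk1, if_pos hk]
    obtain ⟨m, hm⟩ : ∃ m, n - k = m + 1 := ⟨n - k - 1, by omega⟩
    have hm2 : n - (k+1) = m := by omega
    have hnk : (n : ℝ) - (k : ℝ) = (m : ℝ) + 1 := by
      have : n = m + 1 + k := by omega
      subst this; push_cast; ring
    rw [hm, hm2, hnk, asc_eval_succ_left]
    have e1 : α + (k:ℝ) + 1 + 1 = α + ((k:ℕ)+1 : ℕ) + 1 := by push_cast; ring
    rw [e1]
    have f1 : ((m+1).factorial : ℝ) = ((m:ℝ)+1) * m.factorial := by
      rw [Nat.factorial_succ]; push_cast; ring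
    have f2 : ((k+1).factorial : ℝ) = ((k:ℝ)+1) * k.factorial := by
      rw [Nat.factorial_succ]; push_cast; ring
    rw [f1, f2, pow_succ]
    have h1 : (m.factorial : ℝ) ≠ 0 := Nat.cast_ne_zero.mpr m.factorial_ne_zero
    have h2 : (k.factorial : ℝ) ≠ 0 := Nat.cast_ne_zero.mpr k.factorial_ne_zero
    have h3 : ((m:ℝ)+1) ≠ 0 := by positivity
    have h4 : ((k:ℝ)+1) ≠ 0 := by positivity
    push_cast
    field_simp
    ring
  · subst h
    rw [if_neg (by omega), if_pos le_rfl]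
    simp
  · rw [if_neg (by omega), if_neg (by omega)]
    simp

lemma laguerre_ode (α : ℝ) (n : ℕ) :
    X * derivative (derivative (laguerreP α n))
      + (C (α+1) - X) * derivative (laguerreP α n)
      + C (n:ℝ) * laguerreP α n = 0 := by
  ext k
  rcases k with _ | k
  · simp only [coeff_add, coeff_zero, sub_mul, coeff_sub, mul_coeff_zero, coeff_X_zero,
      coeff_C_mul, zero_mul, coeff_derivative, coeff_C_zero]
    have := key α n 0
    push_cast at this ⊢
    linear_combination this
  · simp only [coeff_add, coeff_zero, sub_mul, coeff_sub, coeff_X_mul,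
      coeff_C_mul, coeff_derivative]
    have h1 := key α n (k+1)
    push_cast at h1 ⊢
    linear_combination h1

lemma xi_ode (α : ℝ) (d : ℕ) (ξ : Polynomial ℝ) (hξ : ξ = (laguerreP α d).comp (-X)) :
    X * derivative (derivative ξ) + (C (α+1) + X) * derivative ξ - C (d:ℝ) * ξ = 0 := by
  set L := laguerreP α d with hL
  have h1 : derivative ξ = -((derivative L).comp (-X)) := by
    rw [hξ, derivative_comp]; simp
  have h2 : derivative (derivative ξ) = (derivative (derivative L)).comp (-X) := by
    rw [h1, derivative_neg, derivative_comp]; simp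
  have hode := congrArg (fun p => p.comp (-X)) (laguerre_ode α d)
  simp only [add_comp, mul_comp, sub_comp, X_comp, C_comp, zero_comp] at hode
  rw [h2, h1, hξ]
  linear_combination -hode


/-- with `ξ(η) = L_d^{(g-1/2)}(-η)`, `P_n = L_n^{(g-1/2)}` and
`F P_n = ξP_n' - (ξ+ξ')P_n`, the polynomial identity
`η(F P_n)' + (g+½)(F P_n) = -(n+g+d+½) ξ P_n` holds. -/
theorem xlaguerre_backward_forward (g : ℝ) (d : ℕ) (hd : 1 ≤ d) (n : ℕ)
    (ξ : Polynomial ℝ) (hξ : ξ = (laguerreP (g - 1/2) d).comp (-Polynomial.X)) :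
    Polynomial.X * Polynomial.derivative
        (ξ * Polynomial.derivative (laguerreP (g - 1/2) n)
          - (ξ + Polynomial.derivative ξ) * laguerreP (g - 1/2) n)
      + Polynomial.C (g + 1/2) *
        (ξ * Polynomial.derivative (laguerreP (g - 1/2) n)
          - (ξ + Polynomial.derivative ξ) * laguerreP (g - 1/2) n)
    = -(Polynomial.C ((n : ℝ) + g + (d : ℝ) + 1/2)) * ξ * laguerreP (g - 1/2) n := by
  have heq : g - 1/2 + 1 = g + 1/2 := by ring
  have hP := laguerre_ode (g - 1/2) n
  have hX := xi_ode (g - 1/2) d ξ hξ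
  rw [heq] at hP hX
  have hc : (C ((n:ℝ) + g + (d:ℝ) + 1/2) : Polynomial ℝ)
      = C (n:ℝ) + C (g + 1/2) + C (d:ℝ) := by
    rw [← C_add, ← C_add]; ring_nf
  rw [hc]
  simp only [derivative_sub, derivative_mul, derivative_add]
  linear_combination ξ * hP - laguerreP (g - 1/2) n * hX
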